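/- For the tensor product of abstract crystals and an imaginary index i, the operations ẽ_i and f̃_i on B₁ ⊗ B₂ are mutually inverse where defined: f̃_i(b⊗b') = c implies ẽ_i(c) = b⊗b', and ẽ_i(b⊗b') = c ≠ 0 implies f̃_i(c) = b⊗b'. -/

import Mathlib

/-- The data of an abstract crystal for a quantum generalized Kac-Moody algebra:
a set `B` with weight map `wt : B → P`, Kashiwara operators
`e i, f i : B → B ⊔ {0}` (encoded via `Option`, `none` playing the role of `0`)
and maps `ε i, φ i : B → ℤ ⊔ {-∞}` (encoded as `WithBot ℤ`). -/
structure CrystalData (I P B : Type) where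
  wt : B → P
  e : I → B → Option B
  f : I → B → Option B
  eps : I → B → WithBot ℤ
  phi : I → B → WithBot ℤ

/-- The axioms (i)-(vii) of an abstract crystal for a quantum generalized
Kac-Moody algebra with symmetric Borcherds-Cartan matrix `a`, simple roots
`α i ∈ P` and pairing `pair i p = ⟨h_i, p⟩`.  An index `i` is real when
`a i i = 2` and imaginary otherwise. -/
structure IsAbstractCrystal {I P B : Type} [AddCommGroup P]
    (a : I → I → ℤ) (α : I → P) (pair : I → P → ℤ)
    (C : CrystalData I P B) : Prop where
  /-- (i) `wt(ẽᵢ b) = wt b + αᵢ`. -/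
  wt_e : ∀ i b b', C.e i b = some b' → C.wt b' = C.wt b + α i
  /-- (ii) `wt(f̃ᵢ b) = wt b - αᵢ`. -/
  wt_f : ∀ i b b', C.f i b = some b' → C.wt b' = C.wt b - α i
  /-- (iii) `φᵢ(b) = εᵢ(b) + ⟨hᵢ, wt b⟩`. -/
  phi_eq : ∀ i b, C.phi i b = C.eps i b + (pair i (C.wt b) : WithBot ℤ)
  /-- (iv) `f̃ᵢ b = b'` iff `b = ẽᵢ b'`. -/
  ef_iff : ∀ i b b', C.f i b = some b' ↔ C.e i b' = some b
  /-- (v)(a) real case: `εᵢ(ẽᵢ b) = εᵢ(b) - 1`, `φᵢ(ẽᵢ b) = φᵢ(b) + 1`. -/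
  e_real : ∀ i b b', a i i = 2 → C.e i b = some b' →
    C.eps i b' = C.eps i b + ((-1 : ℤ) : WithBot ℤ) ∧
    C.phi i b' = C.phi i b + ((1 : ℤ) : WithBot ℤ)
  /-- (v)(b) imaginary case: `εᵢ(ẽᵢ b) = εᵢ(b)`, `φᵢ(ẽᵢ b) = φᵢ(b) + aᵢᵢ`. -/
  e_imag : ∀ i b b', a i i ≠ 2 → C.e i b = some b' →
    C.eps i b' = C.eps i b ∧
    C.phi i b' = C.phi i b + ((a i i : ℤ) : WithBot ℤ)
  /-- (vi)(a) real case: `εᵢ(f̃ᵢ b) = εᵢ(b) + 1`, `φᵢ(f̃ᵢ b) = φᵢ(b) - 1`. -/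
  f_real : ∀ i b b', a i i = 2 → C.f i b = some b' →
    C.eps i b' = C.eps i b + ((1 : ℤ) : WithBot ℤ) ∧
    C.phi i b' = C.phi i b + ((-1 : ℤ) : WithBot ℤ)
  /-- (vi)(b) imaginary case: `εᵢ(f̃ᵢ b) = εᵢ(b)`, `φᵢ(f̃ᵢ b) = φᵢ(b) - aᵢᵢ`. -/
  f_imag : ∀ i b b', a i i ≠ 2 → C.f i b = some b' →
    C.eps i b' = C.eps i b ∧
    C.phi i b' = C.phi i b + ((-(a i i) : ℤ) : WithBot ℤ)
  /-- (vii) if `φᵢ(b) = -∞` then `ẽᵢ b = f̃ᵢ b = 0`. -/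
  phi_bot : ∀ i b, C.phi i b = ⊥ → C.e i b = none ∧ C.f i b = none

/-- The elementary crystal `B_i = {b_i(-n) : n ≥ 0}`, with carrier `ℕ`
(`n` standing for `b_i(-n)`), weight lattice realized inside the root
lattice `I →₀ ℤ` (so that `α j = Finsupp.single j 1`). -/
noncomputable def elemData (I : Type) [DecidableEq I] (a : I → I → ℤ) (i : I) :
    CrystalData I (I →₀ ℤ) ℕ where
  wt n := Finsupp.single i (-(n : ℤ))
  e j n := if j = i then (if n = 0 then none else some (n - 1)) else none
  f j n := if j = i then some (n + 1) else none
  eps j n := if j = i then (if a i i = 2 then ((n : ℤ) : WithBot ℤ) else 0) else ⊥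
  phi j n := if j = i then
      (((if a i i = 2 then -(n : ℤ) else -(n : ℤ) * a i i) : ℤ) : WithBot ℤ) else ⊥

/-- The tensor product `B₁ ⊗ B₂` of two crystals, with the signed rules of
Jeong-Kang-Kashiwara-Shin: `εᵢ(b⊗b') = max(εᵢ(b), εᵢ(b') - wtᵢ(b))`,
`φᵢ(b⊗b') = max(φᵢ(b) + wtᵢ(b'), φᵢ(b'))`, the usual rule for `f̃ᵢ`, the
usual rule for `ẽᵢ` at a real index, and the three-case rule for `ẽᵢ` at an
imaginary index. -/
noncomputable def tensorData {I P B₁ B₂ : Type} [AddCommGroup P] [DecidableEq I]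
    (a : I → I → ℤ) (pair : I → P → ℤ)
    (C₁ : CrystalData I P B₁) (C₂ : CrystalData I P B₂) :
    CrystalData I P (B₁ × B₂) where
  wt p := C₁.wt p.1 + C₂.wt p.2
  eps i p := max (C₁.eps i p.1)
    (C₂.eps i p.2 + ((-(pair i (C₁.wt p.1)) : ℤ) : WithBot ℤ))
  phi i p := max (C₁.phi i p.1 + ((pair i (C₂.wt p.2) : ℤ) : WithBot ℤ))
    (C₂.phi i p.2)
  f i p := if C₂.eps i p.2 < C₁.phi i p.1
    then (C₁.f i p.1).map (fun x => (x, p.2))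
    else (C₂.f i p.2).map (fun y => (p.1, y))
  e i p := if a i i = 2 then
      (if C₂.eps i p.2 ≤ C₁.phi i p.1
        then (C₁.e i p.1).map (fun x => (x, p.2))
        else (C₂.e i p.2).map (fun y => (p.1, y)))
    else
      (if C₂.eps i p.2 + ((-(a i i) : ℤ) : WithBot ℤ) < C₁.phi i p.1
        then (C₁.e i p.1).map (fun x => (x, p.2))
        else if C₁.phi i p.1 ≤ C₂.eps i p.2
          then (C₂.e i p.2).map (fun y => (p.1, y))
          else none)


private lemma wb_shift_lt (x y : WithBot ℤ) (m : ℤ) :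
    x + (m : WithBot ℤ) < y ↔ x < y + ((-m : ℤ) : WithBot ℤ) := by
  induction x using WithBot.recBotCoe with
  | bot =>
    induction y using WithBot.recBotCoe with
    | bot => simp
    | coe n => simp [← WithBot.coe_add]
  | coe k =>
    induction y using WithBot.recBotCoe with
    | bot => simp [← WithBot.coe_add]
    | coe n =>
      rw [← WithBot.coe_add, ← WithBot.coe_add, WithBot.coe_lt_coe, WithBot.coe_lt_coe]
      omega

private lemma wb_le_add_nonneg (x : WithBot ℤ) (m : ℤ) (hm : 0 ≤ m) :
    x ≤ x + (m : WithBot ℤ) := by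
  induction x using WithBot.recBotCoe with
  | bot => simp
  | coe k =>
    rw [← WithBot.coe_add, WithBot.coe_le_coe]
    omega

private lemma wb_add_lt_add (x y : WithBot ℤ) (m : ℤ) (h : x < y) :
    x + (m : WithBot ℤ) < y + (m : WithBot ℤ) := by
  induction y using WithBot.recBotCoe with
  | bot => exact absurd h (by simp)
  | coe n =>
    induction x using WithBot.recBotCoe with
    | bot => rw [WithBot.bot_add, ← WithBot.coe_add]; exact WithBot.bot_lt_coe _
    | coe k =>
      rw [WithBot.coe_lt_coe] at h
      rw [← WithBot.coe_add, ← WithBot.coe_add, WithBot.coe_lt_coe]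
      omega

/-- **For an imaginary index, `ẽᵢ` and `f̃ᵢ` on a tensor product of crystals
are mutually inverse where defined:** `f̃ᵢ(b⊗b') = c` implies
`ẽᵢ(c) = b⊗b'`, and `ẽᵢ(b⊗b') = c ≠ 0` implies `f̃ᵢ(c) = b⊗b'`. -/
theorem tensor_e_f_inverse_imaginary (I P B₁ B₂ : Type) [AddCommGroup P]
    [DecidableEq I]
    (a : I → I → ℤ)
    (hdiag : ∀ j, a j j = 2 ∨ (a j j ≤ 0 ∧ Even (a j j)))
    (hsymm : ∀ j k, a j k = a k j)
    (hoff : ∀ j k, j ≠ k → a j k ≤ 0)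
    (α : I → P) (pair : I → P → ℤ)
    (hpair : ∀ j k, pair j (α k) = a j k)
    (hpair_add : ∀ j p q, pair j (p + q) = pair j p + pair j q)
    (C₁ : CrystalData I P B₁) (C₂ : CrystalData I P B₂)
    (h₁ : IsAbstractCrystal a α pair C₁)
    (h₂ : IsAbstractCrystal a α pair C₂)
    (i : I) (himag : a i i ≤ 0) :
    (∀ p c, (tensorData a pair C₁ C₂).f i p = some c →
      (tensorData a pair C₁ C₂).e i c = some p) ∧
    (∀ p c, (tensorData a pair C₁ C₂).e i p = some c →
      (tensorData a pair C₁ C₂).f i c = some p) := by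
  have hne : a i i ≠ 2 := by omega
  constructor
  · rintro ⟨b, b'⟩ c hc
    simp only [tensorData] at hc ⊢
    rw [if_neg hne]
    split_ifs at hc with h
    · -- f acts on first factor
      cases hfx : C₁.f i b with
      | none => rw [hfx] at hc; simp at hc
      | some x =>
        rw [hfx] at hc; simp only [Option.map_some] at hc
        obtain rfl := Option.some_injective _ hc
        have hex : C₁.e i x = some b := (h₁.ef_iff i b x).mp hfx
        have himg := h₁.f_imag i b x hne hfx
        rw [if_pos, hex]
        · rfl
        · rw [himg.2]
          exact wb_add_lt_add _ _ _ h
    · -- f acts on second factor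
      cases hfy : C₂.f i b' with
      | none => rw [hfy] at hc; simp at hc
      | some y =>
        rw [hfy] at hc; simp only [Option.map_some] at hc
        obtain rfl := Option.some_injective _ hc
        have hey : C₂.e i y = some b' := (h₂.ef_iff i b' y).mp hfy
        have himg := h₂.f_imag i b' y hne hfy
        push_neg at h
        rw [if_neg, if_pos, hey]
        · rfl
        · rw [himg.1]; exact h
        · rw [himg.1]
          exact not_lt.mpr (h.trans (wb_le_add_nonneg _ _ (by omega)))
  · rintro ⟨b, b'⟩ c hc
    simp only [tensorData] at hc ⊢
    rw [if_neg hne] at hc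
    split_ifs at hc with h h'
    · -- e acts on first factor
      cases hex : C₁.e i b with
      | none => rw [hex] at hc; simp at hc
      | some x =>
        rw [hex] at hc; simp only [Option.map_some] at hc
        obtain rfl := Option.some_injective _ hc
        have hfx : C₁.f i x = some b := (h₁.ef_iff i x b).mpr hex
        have himg := h₁.e_imag i b x hne hex
        rw [if_pos, hfx]
        · rfl
        · rw [himg.2]
          simpa using (wb_shift_lt _ _ (-(a i i))).mp h
    · -- e acts on second factor
      cases hey : C₂.e i b' with
      | none => rw [hey] at hc; simp at hc
      | some y =>
        rw [hey] at hc; simp only [Option.map_some] at hc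
        obtain rfl := Option.some_injective _ hc
        have hfy : C₂.f i y = some b' := (h₂.ef_iff i y b').mpr hey
        have himg := h₂.e_imag i b' y hne hey
        rw [if_neg, hfy]
        · rfl
        · rw [himg.1]
          exact not_lt.mpr h'
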